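/- Let q, ℓ be nonzero real numbers. Then: (i) there exists a unique star structure ★ₘ on the complex q-linked Minkowski algebra M^{ℓ,q} with t₁₁^{★ₘ} = t₁₁, t₁₂^{★ₘ} = t₂₁, t₂₁^{★ₘ} = t₁₂, t₂₂^{★ₘ} = t₂₂, and it fixes the quantum metric: (Q_{ℓ/q})^{★ₘ} = Q_{ℓ/q}; (ii) there exists a unique star structure ★ₗ on the q-linked complex Lorentz algebra L_{q,ℓ} with a^{★ₗ} = d', b^{★ₗ} = −q⁻¹c', c^{★ₗ} = −qb', d^{★ₗ} = a', a'^{★ₗ} = d, b'^{★ₗ} = −q⁻¹c, c'^{★ₗ} = −qb, d'^{★ₗ} = a; (iii) the coaction ρ intertwines these star structures: ρ ∘ ★ₘ = (★ₗ ⊗ ★ₘ) ∘ ρ, where ★ₗ ⊗ ★ₘ denotes the induced conjugate-linear map on L_{q,ℓ} ⊗ M^{ℓ,q}. (Thus the real q-linked Minkowski space is a quantum homogeneous space for the deformed real Lorentz group.) -/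

import Mathlib

noncomputable section

open FreeAlgebra
open scoped TensorProduct

/-- The relations of the q-linked complex Lorentz algebra `L_{q,ℓ}`: generators
`a = ι ℂ 0, b = ι ℂ 1, c = ι ℂ 2, d = ι ℂ 3` and `a' = ι ℂ 4, b' = ι ℂ 5,
c' = ι ℂ 6, d' = ι ℂ 7`, Manin relations with parameter `q` in both sectors, the
link relations, the commutation relations, and the determinant relations. -/
inductive LRel (q ℓ : ℂ) : FreeAlgebra ℂ (Fin 8) → FreeAlgebra ℂ (Fin 8) → Prop
  | ab : LRel q ℓ (ι ℂ 0 * ι ℂ 1) (q⁻¹ • (ι ℂ 1 * ι ℂ 0))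
  | ac : LRel q ℓ (ι ℂ 0 * ι ℂ 2) (q⁻¹ • (ι ℂ 2 * ι ℂ 0))
  | bd : LRel q ℓ (ι ℂ 1 * ι ℂ 3) (q⁻¹ • (ι ℂ 3 * ι ℂ 1))
  | cd : LRel q ℓ (ι ℂ 2 * ι ℂ 3) (q⁻¹ • (ι ℂ 3 * ι ℂ 2))
  | bc : LRel q ℓ (ι ℂ 1 * ι ℂ 2) (ι ℂ 2 * ι ℂ 1)
  | ad : LRel q ℓ (ι ℂ 0 * ι ℂ 3 - ι ℂ 3 * ι ℂ 0) ((q⁻¹ - q) • (ι ℂ 1 * ι ℂ 2))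
  | ab' : LRel q ℓ (ι ℂ 4 * ι ℂ 5) (q⁻¹ • (ι ℂ 5 * ι ℂ 4))
  | ac' : LRel q ℓ (ι ℂ 4 * ι ℂ 6) (q⁻¹ • (ι ℂ 6 * ι ℂ 4))
  | bd' : LRel q ℓ (ι ℂ 5 * ι ℂ 7) (q⁻¹ • (ι ℂ 7 * ι ℂ 5))
  | cd' : LRel q ℓ (ι ℂ 6 * ι ℂ 7) (q⁻¹ • (ι ℂ 7 * ι ℂ 6))
  | bc' : LRel q ℓ (ι ℂ 5 * ι ℂ 6) (ι ℂ 6 * ι ℂ 5)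
  | ad' : LRel q ℓ (ι ℂ 4 * ι ℂ 7 - ι ℂ 7 * ι ℂ 4) ((q⁻¹ - q) • (ι ℂ 5 * ι ℂ 6))
  | link₁ : LRel q ℓ (ι ℂ 5 * ι ℂ 0) (ℓ • (ι ℂ 0 * ι ℂ 5))
  | link₂ : LRel q ℓ (ι ℂ 0 * ι ℂ 6) (ℓ • (ι ℂ 6 * ι ℂ 0))
  | link₃ : LRel q ℓ (ι ℂ 4 * ι ℂ 1) (ℓ • (ι ℂ 1 * ι ℂ 4))
  | link₄ : LRel q ℓ (ι ℂ 1 * ι ℂ 7) (ℓ • (ι ℂ 7 * ι ℂ 1))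
  | link₅ : LRel q ℓ (ι ℂ 2 * ι ℂ 4) (ℓ • (ι ℂ 4 * ι ℂ 2))
  | link₆ : LRel q ℓ (ι ℂ 7 * ι ℂ 2) (ℓ • (ι ℂ 2 * ι ℂ 7))
  | link₇ : LRel q ℓ (ι ℂ 3 * ι ℂ 5) (ℓ • (ι ℂ 5 * ι ℂ 3))
  | link₈ : LRel q ℓ (ι ℂ 6 * ι ℂ 3) (ℓ • (ι ℂ 3 * ι ℂ 6))
  | comm₁ : LRel q ℓ (ι ℂ 0 * ι ℂ 4) (ι ℂ 4 * ι ℂ 0)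
  | comm₂ : LRel q ℓ (ι ℂ 0 * ι ℂ 7) (ι ℂ 7 * ι ℂ 0)
  | comm₃ : LRel q ℓ (ι ℂ 1 * ι ℂ 5) (ι ℂ 5 * ι ℂ 1)
  | comm₄ : LRel q ℓ (ι ℂ 1 * ι ℂ 6) (ι ℂ 6 * ι ℂ 1)
  | comm₅ : LRel q ℓ (ι ℂ 2 * ι ℂ 5) (ι ℂ 5 * ι ℂ 2)
  | comm₆ : LRel q ℓ (ι ℂ 2 * ι ℂ 6) (ι ℂ 6 * ι ℂ 2)
  | comm₇ : LRel q ℓ (ι ℂ 3 * ι ℂ 4) (ι ℂ 4 * ι ℂ 3)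
  | comm₈ : LRel q ℓ (ι ℂ 3 * ι ℂ 7) (ι ℂ 7 * ι ℂ 3)
  | det : LRel q ℓ (ι ℂ 0 * ι ℂ 3 - q⁻¹ • (ι ℂ 1 * ι ℂ 2)) 1
  | det' : LRel q ℓ (ι ℂ 4 * ι ℂ 7 - q⁻¹ • (ι ℂ 5 * ι ℂ 6)) 1

/-- The q-linked complex Lorentz algebra `L_{q,ℓ}`. -/
abbrev LAlg (q ℓ : ℂ) := RingQuot (LRel q ℓ)

/-- The images of the eight generators of `L_{q,ℓ}`. -/
def lgen (q ℓ : ℂ) (i : Fin 8) : LAlg q ℓ :=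
  RingQuot.mkAlgHom ℂ (LRel q ℓ) (ι ℂ i)

/-- The relations of the complex q-linked Minkowski algebra `M^{ℓ,q}`, with
generators `t₁₁ = ι ℂ 0`, `t₁₂ = ι ℂ 1`, `t₂₁ = ι ℂ 2`, `t₂₂ = ι ℂ 3`. -/
inductive MRel (q ℓ : ℂ) : FreeAlgebra ℂ (Fin 4) → FreeAlgebra ℂ (Fin 4) → Prop
  | r₁ : MRel q ℓ (ι ℂ 0 * ι ℂ 1) ((q * ℓ) • (ι ℂ 1 * ι ℂ 0))
  | r₂ : MRel q ℓ (ι ℂ 1 * ι ℂ 3) ((q⁻¹ * ℓ) • (ι ℂ 3 * ι ℂ 1))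
  | r₃ : MRel q ℓ (ι ℂ 0 * ι ℂ 2) ((q⁻¹ * ℓ⁻¹) • (ι ℂ 2 * ι ℂ 0))
  | r₄ : MRel q ℓ (ι ℂ 2 * ι ℂ 3) ((q * ℓ⁻¹) • (ι ℂ 3 * ι ℂ 2))
  | r₅ : MRel q ℓ (ι ℂ 0 * ι ℂ 3) (ι ℂ 3 * ι ℂ 0)
  | r₆ : MRel q ℓ (ι ℂ 1 * ι ℂ 2) (ι ℂ 2 * ι ℂ 1 + (ℓ * (q⁻¹ - q)) • (ι ℂ 0 * ι ℂ 3))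

/-- The complex q-linked Minkowski algebra `M^{ℓ,q}`. -/
abbrev MAlg (q ℓ : ℂ) := RingQuot (MRel q ℓ)

/-- The images of the generators `t₁₁, t₁₂, t₂₁, t₂₂` of `M^{ℓ,q}`. -/
def tgen (q ℓ : ℂ) (i : Fin 4) : MAlg q ℓ :=
  RingQuot.mkAlgHom ℂ (MRel q ℓ) (ι ℂ i)

/-- The matrix `(t_{ij})` of generators of `M^{ℓ,q}`. -/
def tmat (q ℓ : ℂ) : Fin 2 → Fin 2 → MAlg q ℓ :=
  ![![tgen q ℓ 0, tgen q ℓ 1], ![tgen q ℓ 2, tgen q ℓ 3]]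

/-- The quantum metric `Q_{ℓ/q} = t₁₂ t₂₁ − q⁻¹ℓ · t₁₁ t₂₂`. -/
def Qmetric (q ℓ : ℂ) : MAlg q ℓ :=
  tgen q ℓ 1 * tgen q ℓ 2 - (q⁻¹ * ℓ) • (tgen q ℓ 0 * tgen q ℓ 3)

/-- The antichiral matrix `(y_{ij}) = (a' b'; c' d')` of `L_{q,ℓ}`. -/
def ymat (q ℓ : ℂ) : Fin 2 → Fin 2 → LAlg q ℓ :=
  ![![lgen q ℓ 4, lgen q ℓ 5], ![lgen q ℓ 6, lgen q ℓ 7]]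

/-- The entrywise antipode `(σ_{ij}) = (d −qb; −q⁻¹c a)` of the chiral matrix of
`L_{q,ℓ}`. -/
def σmat (q ℓ : ℂ) : Fin 2 → Fin 2 → LAlg q ℓ :=
  ![![lgen q ℓ 3, (-q) • lgen q ℓ 1], ![(-q⁻¹) • lgen q ℓ 2, lgen q ℓ 0]]

/-- `ρ` is the coaction of `L_{q,ℓ}` on `M^{ℓ,q}`:
`ρ(t_{ij}) = Σ_{s,r} y_{is} σ_{rj} ⊗ t_{sr}`. -/
def IsCoaction (q ℓ : ℂ) (ρ : MAlg q ℓ →ₐ[ℂ] (LAlg q ℓ ⊗[ℂ] MAlg q ℓ)) : Prop :=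
  ∀ i j : Fin 2, ρ (tmat q ℓ i j) =
    ∑ s : Fin 2, ∑ r : Fin 2, (ymat q ℓ i s * σmat q ℓ r j) ⊗ₜ[ℂ] tmat q ℓ s r

/-- A star structure on a complex algebra: additive, conjugate-linear,
antimultiplicative, unital, involutive. -/
def IsStar {A : Type*} [Ring A] [Algebra ℂ A] (st : A → A) : Prop :=
  (∀ x y : A, st (x + y) = st x + st y) ∧
  (∀ (z : ℂ) (x : A), st (z • x) = (starRingEnd ℂ) z • st x) ∧
  (∀ x y : A, st (x * y) = st y * st x) ∧
  st 1 = 1 ∧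
  (∀ x : A, st (st x) = x)

/-- The prescribed values of the star structure on the Minkowski generators. -/
def MStarVals (q ℓ : ℂ) (st : MAlg q ℓ → MAlg q ℓ) : Prop :=
  st (tgen q ℓ 0) = tgen q ℓ 0 ∧ st (tgen q ℓ 1) = tgen q ℓ 2 ∧
  st (tgen q ℓ 2) = tgen q ℓ 1 ∧ st (tgen q ℓ 3) = tgen q ℓ 3

/-- The prescribed values of the star structure on the generators of `L_{q,ℓ}`. -/
def LStarVals (q ℓ : ℂ) (st : LAlg q ℓ → LAlg q ℓ) : Prop :=
  st (lgen q ℓ 0) = lgen q ℓ 7 ∧ st (lgen q ℓ 1) = (-q⁻¹) • lgen q ℓ 6 ∧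
  st (lgen q ℓ 2) = (-q) • lgen q ℓ 5 ∧ st (lgen q ℓ 3) = lgen q ℓ 4 ∧
  st (lgen q ℓ 4) = lgen q ℓ 3 ∧ st (lgen q ℓ 5) = (-q⁻¹) • lgen q ℓ 2 ∧
  st (lgen q ℓ 6) = (-q) • lgen q ℓ 1 ∧ st (lgen q ℓ 7) = lgen q ℓ 0

namespace QStar

/-- Type synonym carrying the conjugate `ℂ`-algebra structure. -/
def Konj (A : Type*) : Type _ := A

instance {A : Type*} [Ring A] : Ring (Konj A) := inferInstanceAs (Ring A)

noncomputable instance {A : Type*} [Ring A] [Algebra ℂ A] : Algebra ℂ (Konj A) :=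
  RingHom.toAlgebra' ((algebraMap ℂ A).comp (starRingEnd ℂ))
    (fun c x => Algebra.commutes (A := A) ((starRingEnd ℂ) c) x)

lemma Konj.algebraMap_apply {A : Type*} [Ring A] [Algebra ℂ A] (z : ℂ) :
    (algebraMap ℂ (Konj A) z : A) = algebraMap ℂ A ((starRingEnd ℂ) z) := rfl

variable {n : ℕ} {Rel : FreeAlgebra ℂ (Fin n) → FreeAlgebra ℂ (Fin n) → Prop}

noncomputable def preStarAux (v : Fin n → RingQuot Rel) :
    FreeAlgebra ℂ (Fin n) →ₐ[ℂ] Konj (RingQuot Rel)ᵐᵒᵖ :=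
  FreeAlgebra.lift ℂ (fun i => (MulOpposite.op (v i) : Konj (RingQuot Rel)ᵐᵒᵖ))

/-- The conjugate-linear antimultiplicative extension of generator values `v`. -/
noncomputable def preStar (v : Fin n → RingQuot Rel) :
    FreeAlgebra ℂ (Fin n) →+* (RingQuot Rel)ᵐᵒᵖ where
  toFun x := (preStarAux v x : Konj (RingQuot Rel)ᵐᵒᵖ)
  map_one' := map_one (preStarAux v)
  map_mul' x y := map_mul (preStarAux v) x y
  map_zero' := map_zero (preStarAux v)
  map_add' x y := map_add (preStarAux v) x y

variable (v : Fin n → RingQuot Rel)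

lemma preStar_ι (i : Fin n) : preStar v (ι ℂ i) = MulOpposite.op (v i) := by
  show preStarAux v (ι ℂ i) = _
  rw [preStarAux]
  exact FreeAlgebra.lift_ι_apply _ _

lemma preStar_algebraMap (z : ℂ) :
    preStar v (algebraMap ℂ _ z)
      = MulOpposite.op (algebraMap ℂ (RingQuot Rel) ((starRingEnd ℂ) z)) := by
  show preStarAux v (algebraMap ℂ _ z) = _
  rw [AlgHom.commutes]
  rfl

lemma preStar_smul (z : ℂ) (x : FreeAlgebra ℂ (Fin n)) :
    preStar v (z • x) = (starRingEnd ℂ) z • preStar v x := by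
  rw [Algebra.smul_def, map_mul, preStar_algebraMap, Algebra.smul_def,
    MulOpposite.algebraMap_apply]

lemma preStar_mul_ι (i j : Fin n) :
    preStar v (ι ℂ i * ι ℂ j) = MulOpposite.op (v j * v i) := by
  rw [map_mul, preStar_ι, preStar_ι, ← MulOpposite.op_mul]

lemma preStar_smul_mul_ι (c : ℂ) (i j : Fin n) :
    preStar v (c • (ι ℂ i * ι ℂ j))
      = MulOpposite.op ((starRingEnd ℂ) c • (v j * v i)) := by
  rw [preStar_smul, preStar_mul_ι, MulOpposite.op_smul]

variable (h : ∀ ⦃x y⦄, Rel x y → preStar v x = preStar v y)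

noncomputable def qStar : RingQuot Rel → RingQuot Rel :=
  fun x => (RingQuot.lift ⟨preStar v, h⟩ x).unop

lemma qStar_mk (x : FreeAlgebra ℂ (Fin n)) :
    qStar v h (RingQuot.mkAlgHom ℂ Rel x) = (preStar v x).unop := by
  have hx : (RingQuot.mkAlgHom ℂ Rel) x = RingQuot.mkRingHom Rel x := by
    rw [← RingQuot.mkAlgHom_coe ℂ Rel]; rfl
  rw [qStar, hx, RingQuot.lift_mkRingHom_apply]

lemma qStar_gen (i : Fin n) : qStar v h (RingQuot.mkAlgHom ℂ Rel (ι ℂ i)) = v i := by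
  rw [qStar_mk, preStar_ι]; rfl

lemma qStar_add (x y : RingQuot Rel) : qStar v h (x + y) = qStar v h x + qStar v h y := by
  simp [qStar, map_add]

lemma qStar_mul (x y : RingQuot Rel) : qStar v h (x * y) = qStar v h y * qStar v h x := by
  simp [qStar, map_mul]

lemma qStar_one : qStar v h 1 = 1 := by simp [qStar]

lemma qStar_algebraMap (z : ℂ) :
    qStar v h (algebraMap ℂ (RingQuot Rel) z) = algebraMap ℂ _ ((starRingEnd ℂ) z) := by
  have : algebraMap ℂ (RingQuot Rel) z = RingQuot.mkAlgHom ℂ Rel (algebraMap ℂ _ z) :=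
    ((RingQuot.mkAlgHom ℂ Rel).commutes z).symm
  rw [this, qStar_mk, preStar_algebraMap]
  rfl

lemma qStar_smul (z : ℂ) (x : RingQuot Rel) :
    qStar v h (z • x) = (starRingEnd ℂ) z • qStar v h x := by
  rw [Algebra.smul_def, qStar_mul, qStar_algebraMap, ← Algebra.commutes, ← Algebra.smul_def]

lemma qStar_isStar (hv : ∀ i, qStar v h (v i) = RingQuot.mkAlgHom ℂ Rel (ι ℂ i)) :
    IsStar (qStar v h) := by
  refine ⟨qStar_add v h, qStar_smul v h, qStar_mul v h, qStar_one v h, ?_⟩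
  intro x
  obtain ⟨y, rfl⟩ := RingQuot.mkAlgHom_surjective ℂ Rel x
  induction y using FreeAlgebra.induction with
  | grade0 z =>
      rw [(RingQuot.mkAlgHom ℂ Rel).commutes z, qStar_algebraMap, qStar_algebraMap]
      simp
  | grade1 i => rw [qStar_gen, hv]
  | mul a b ha hb => rw [map_mul, qStar_mul, qStar_mul, ha, hb]
  | add a b ha hb => rw [map_add, qStar_add, qStar_add, ha, hb]

lemma isStar_ext (f g : RingQuot Rel → RingQuot Rel) (hf : IsStar f) (hg : IsStar g)
    (hfg : ∀ i, f (RingQuot.mkAlgHom ℂ Rel (ι ℂ i)) = g (RingQuot.mkAlgHom ℂ Rel (ι ℂ i))) :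
    f = g := by
  obtain ⟨hf1, hf2, hf3, hf4, _⟩ := hf
  obtain ⟨hg1, hg2, hg3, hg4, _⟩ := hg
  funext x
  obtain ⟨y, rfl⟩ := RingQuot.mkAlgHom_surjective ℂ Rel x
  induction y using FreeAlgebra.induction with
  | grade0 z =>
      rw [(RingQuot.mkAlgHom ℂ Rel).commutes z, Algebra.algebraMap_eq_smul_one, hf2, hg2, hf4, hg4]
  | grade1 i => exact hfg i
  | mul a b ha hb => rw [map_mul, hf3, hg3, ha, hb]
  | add a b ha hb => rw [map_add, hf1, hg1, ha, hb]


lemma IsStar.sub {A : Type*} [Ring A] [Algebra ℂ A] {st : A → A} (h : IsStar st) (x y : A) :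
    st (x - y) = st x - st y := by
  obtain ⟨h1, h2, _, _, _⟩ := h
  have hneg : st (-y) = - st y := by
    have := h2 (-1) y
    simpa using this
  rw [sub_eq_add_neg, h1, hneg, sub_eq_add_neg]

section Mink
variable (q ℓ : ℝ)

local notation "Q" => (q : ℂ)
local notation "Λ" => (ℓ : ℂ)

/-- Star values on Minkowski generators. -/
def vM : Fin 4 → MAlg Q Λ := ![tgen Q Λ 0, tgen Q Λ 2, tgen Q Λ 1, tgen Q Λ 3]

lemma tgen_mk (i : Fin 4) : tgen Q Λ i = RingQuot.mkAlgHom ℂ (MRel Q Λ) (ι ℂ i) := rfl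

lemma vM0 : vM q ℓ 0 = tgen Q Λ 0 := rfl
lemma vM1 : vM q ℓ 1 = tgen Q Λ 2 := rfl
lemma vM2 : vM q ℓ 2 = tgen Q Λ 1 := rfl
lemma vM3 : vM q ℓ 3 = tgen Q Λ 3 := rfl

lemma m1 : tgen Q Λ 0 * tgen Q Λ 1 = (Q * Λ) • (tgen Q Λ 1 * tgen Q Λ 0) := by
  simpa [tgen, map_mul] using RingQuot.mkAlgHom_rel ℂ (MRel.r₁ (q := Q) (ℓ := Λ))

lemma m2 : tgen Q Λ 1 * tgen Q Λ 3 = (Q⁻¹ * Λ) • (tgen Q Λ 3 * tgen Q Λ 1) := by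
  simpa [tgen, map_mul] using RingQuot.mkAlgHom_rel ℂ (MRel.r₂ (q := Q) (ℓ := Λ))

lemma m3 : tgen Q Λ 0 * tgen Q Λ 2 = (Q⁻¹ * Λ⁻¹) • (tgen Q Λ 2 * tgen Q Λ 0) := by
  simpa [tgen, map_mul] using RingQuot.mkAlgHom_rel ℂ (MRel.r₃ (q := Q) (ℓ := Λ))

lemma m4 : tgen Q Λ 2 * tgen Q Λ 3 = (Q * Λ⁻¹) • (tgen Q Λ 3 * tgen Q Λ 2) := by
  simpa [tgen, map_mul] using RingQuot.mkAlgHom_rel ℂ (MRel.r₄ (q := Q) (ℓ := Λ))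

lemma m5 : tgen Q Λ 0 * tgen Q Λ 3 = tgen Q Λ 3 * tgen Q Λ 0 := by
  simpa [tgen, map_mul] using RingQuot.mkAlgHom_rel ℂ (MRel.r₅ (q := Q) (ℓ := Λ))

lemma m6 : tgen Q Λ 1 * tgen Q Λ 2
    = tgen Q Λ 2 * tgen Q Λ 1 + (Λ * (Q⁻¹ - Q)) • (tgen Q Λ 0 * tgen Q Λ 3) := by
  simpa [tgen, map_mul] using RingQuot.mkAlgHom_rel ℂ (MRel.r₆ (q := Q) (ℓ := Λ))

lemma hM (hq : q ≠ 0) (hℓ : ℓ ≠ 0) :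
    ∀ ⦃x y⦄, MRel Q Λ x y → preStar (vM q ℓ) x = preStar (vM q ℓ) y := by
  have hQ : Q ≠ 0 := Complex.ofReal_ne_zero.mpr hq
  have hΛ : Λ ≠ 0 := Complex.ofReal_ne_zero.mpr hℓ
  intro x y hxy
  cases hxy with
  | r₁ =>
      simp only [map_mul, preStar_smul, preStar_ι, ← MulOpposite.op_mul,
        ← MulOpposite.op_smul, MulOpposite.op_inj, vM0, vM1, vM2, vM3, map_inv₀, Complex.conj_ofReal]
      rw [m3, smul_smul, show (Q * Λ) * (Q⁻¹ * Λ⁻¹) = 1 by field_simp, one_smul]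
  | r₂ =>
      simp only [map_mul, preStar_smul, preStar_ι, ← MulOpposite.op_mul,
        ← MulOpposite.op_smul, MulOpposite.op_inj, vM0, vM1, vM2, vM3, map_inv₀, Complex.conj_ofReal]
      rw [m4, smul_smul, show (Q⁻¹ * Λ) * (Q * Λ⁻¹) = 1 by field_simp, one_smul]
  | r₃ =>
      simp only [map_mul, preStar_smul, preStar_ι, ← MulOpposite.op_mul,
        ← MulOpposite.op_smul, MulOpposite.op_inj, vM0, vM1, vM2, vM3, map_inv₀, Complex.conj_ofReal]
      rw [m1, smul_smul, show (Q⁻¹ * Λ⁻¹) * (Q * Λ) = 1 by field_simp, one_smul]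
  | r₄ =>
      simp only [map_mul, preStar_smul, preStar_ι, ← MulOpposite.op_mul,
        ← MulOpposite.op_smul, MulOpposite.op_inj, vM0, vM1, vM2, vM3, map_inv₀, Complex.conj_ofReal]
      rw [m2, smul_smul, show (Q * Λ⁻¹) * (Q⁻¹ * Λ) = 1 by field_simp, one_smul]
  | r₅ =>
      simp only [map_mul, preStar_ι, ← MulOpposite.op_mul, MulOpposite.op_inj,
        vM0, vM1, vM2, vM3]
      exact (m5 q ℓ).symm
  | r₆ =>
      simp only [map_mul, map_add, preStar_smul, preStar_ι, ← MulOpposite.op_mul,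
        ← MulOpposite.op_smul, ← MulOpposite.op_add, MulOpposite.op_inj,
        vM0, vM1, vM2, vM3, map_sub, map_inv₀, Complex.conj_ofReal]
      rw [m6, m5]

lemma mvals (hq : q ≠ 0) (hℓ : ℓ ≠ 0) : MStarVals Q Λ (qStar (vM q ℓ) (hM q ℓ hq hℓ)) := by
  refine ⟨?_, ?_, ?_, ?_⟩
  · rw [tgen_mk, qStar_gen, vM0]; exact tgen_mk q ℓ 0
  · rw [tgen_mk, qStar_gen, vM1]
  · rw [tgen_mk, qStar_gen, vM2]
  · rw [tgen_mk, qStar_gen, vM3]; exact tgen_mk q ℓ 3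

lemma mStar_isStar (hq : q ≠ 0) (hℓ : ℓ ≠ 0) : IsStar (qStar (vM q ℓ) (hM q ℓ hq hℓ)) := by
  apply qStar_isStar
  intro i
  fin_cases i
  · show qStar (vM q ℓ) (hM q ℓ hq hℓ) (vM q ℓ 0) = RingQuot.mkAlgHom ℂ (MRel Q Λ) (ι ℂ 0)
    rw [vM0, tgen_mk, qStar_gen, vM0, tgen_mk]
  · show qStar (vM q ℓ) (hM q ℓ hq hℓ) (vM q ℓ 1) = RingQuot.mkAlgHom ℂ (MRel Q Λ) (ι ℂ 1)
    rw [vM1, tgen_mk, qStar_gen, vM2, tgen_mk]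
  · show qStar (vM q ℓ) (hM q ℓ hq hℓ) (vM q ℓ 2) = RingQuot.mkAlgHom ℂ (MRel Q Λ) (ι ℂ 2)
    rw [vM2, tgen_mk, qStar_gen, vM1, tgen_mk]
  · show qStar (vM q ℓ) (hM q ℓ hq hℓ) (vM q ℓ 3) = RingQuot.mkAlgHom ℂ (MRel Q Λ) (ι ℂ 3)
    rw [vM3, tgen_mk, qStar_gen, vM3, tgen_mk]

lemma mink_unique (hq : q ≠ 0) (hℓ : ℓ ≠ 0) :
    ∃! st : MAlg Q Λ → MAlg Q Λ, IsStar st ∧ MStarVals Q Λ st := by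
  refine ⟨qStar (vM q ℓ) (hM q ℓ hq hℓ), ⟨mStar_isStar q ℓ hq hℓ, mvals q ℓ hq hℓ⟩, ?_⟩
  rintro st ⟨hst, hv⟩
  apply isStar_ext st _ hst (mStar_isStar q ℓ hq hℓ)
  have hv' := mvals q ℓ hq hℓ
  intro i
  fin_cases i
  · show st (tgen Q Λ 0) = qStar (vM q ℓ) (hM q ℓ hq hℓ) (tgen Q Λ 0)
    rw [hv.1, hv'.1]
  · show st (tgen Q Λ 1) = qStar (vM q ℓ) (hM q ℓ hq hℓ) (tgen Q Λ 1)
    rw [hv.2.1, hv'.2.1]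
  · show st (tgen Q Λ 2) = qStar (vM q ℓ) (hM q ℓ hq hℓ) (tgen Q Λ 2)
    rw [hv.2.2.1, hv'.2.2.1]
  · show st (tgen Q Λ 3) = qStar (vM q ℓ) (hM q ℓ hq hℓ) (tgen Q Λ 3)
    rw [hv.2.2.2, hv'.2.2.2]

lemma mink_metric (st : MAlg Q Λ → MAlg Q Λ) (h : IsStar st ∧ MStarVals Q Λ st) :
    st (Qmetric Q Λ) = Qmetric Q Λ := by
  obtain ⟨⟨h1, h2, h3, h4, h5⟩, hv⟩ := h
  rw [Qmetric, (IsStar.sub ⟨h1, h2, h3, h4, h5⟩ _ _), h3, h2, h3,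
    hv.1, hv.2.1, hv.2.2.1, hv.2.2.2]
  rw [show (starRingEnd ℂ) (Q⁻¹ * Λ) = Q⁻¹ * Λ by simp [map_mul, map_inv₀, Complex.conj_ofReal]]
  rw [← m5]

end Mink

section Lor
variable (q ℓ : ℝ)

local notation "Q" => (q : ℂ)
local notation "Λ" => (ℓ : ℂ)

/-- Star values on Lorentz generators. -/
def vL : Fin 8 → LAlg Q Λ :=
  ![lgen Q Λ 7, (-Q⁻¹) • lgen Q Λ 6, (-Q) • lgen Q Λ 5, lgen Q Λ 4,
    lgen Q Λ 3, (-Q⁻¹) • lgen Q Λ 2, (-Q) • lgen Q Λ 1, lgen Q Λ 0]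

lemma lgen_mk (i : Fin 8) : lgen Q Λ i = RingQuot.mkAlgHom ℂ (LRel Q Λ) (ι ℂ i) := rfl

lemma vL0 : vL q ℓ 0 = lgen Q Λ 7 := rfl
lemma vL1 : vL q ℓ 1 = (-Q⁻¹) • lgen Q Λ 6 := rfl
lemma vL2 : vL q ℓ 2 = (-Q) • lgen Q Λ 5 := rfl
lemma vL3 : vL q ℓ 3 = lgen Q Λ 4 := rfl
lemma vL4 : vL q ℓ 4 = lgen Q Λ 3 := rfl
lemma vL5 : vL q ℓ 5 = (-Q⁻¹) • lgen Q Λ 2 := rfl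
lemma vL6 : vL q ℓ 6 = (-Q) • lgen Q Λ 1 := rfl
lemma vL7 : vL q ℓ 7 = lgen Q Λ 0 := rfl

lemma lr_ab : lgen Q Λ 0 * lgen Q Λ 1 = Q⁻¹ • (lgen Q Λ 1 * lgen Q Λ 0) := by
  simpa [lgen, map_mul] using RingQuot.mkAlgHom_rel ℂ (LRel.ab (q := Q) (ℓ := Λ))

lemma lr_ac : lgen Q Λ 0 * lgen Q Λ 2 = Q⁻¹ • (lgen Q Λ 2 * lgen Q Λ 0) := by
  simpa [lgen, map_mul] using RingQuot.mkAlgHom_rel ℂ (LRel.ac (q := Q) (ℓ := Λ))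

lemma lr_bd : lgen Q Λ 1 * lgen Q Λ 3 = Q⁻¹ • (lgen Q Λ 3 * lgen Q Λ 1) := by
  simpa [lgen, map_mul] using RingQuot.mkAlgHom_rel ℂ (LRel.bd (q := Q) (ℓ := Λ))

lemma lr_cd : lgen Q Λ 2 * lgen Q Λ 3 = Q⁻¹ • (lgen Q Λ 3 * lgen Q Λ 2) := by
  simpa [lgen, map_mul] using RingQuot.mkAlgHom_rel ℂ (LRel.cd (q := Q) (ℓ := Λ))

lemma lr_ab_p : lgen Q Λ 4 * lgen Q Λ 5 = Q⁻¹ • (lgen Q Λ 5 * lgen Q Λ 4) := by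
  simpa [lgen, map_mul] using RingQuot.mkAlgHom_rel ℂ (LRel.ab' (q := Q) (ℓ := Λ))

lemma lr_ac_p : lgen Q Λ 4 * lgen Q Λ 6 = Q⁻¹ • (lgen Q Λ 6 * lgen Q Λ 4) := by
  simpa [lgen, map_mul] using RingQuot.mkAlgHom_rel ℂ (LRel.ac' (q := Q) (ℓ := Λ))

lemma lr_bd_p : lgen Q Λ 5 * lgen Q Λ 7 = Q⁻¹ • (lgen Q Λ 7 * lgen Q Λ 5) := by
  simpa [lgen, map_mul] using RingQuot.mkAlgHom_rel ℂ (LRel.bd' (q := Q) (ℓ := Λ))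

lemma lr_cd_p : lgen Q Λ 6 * lgen Q Λ 7 = Q⁻¹ • (lgen Q Λ 7 * lgen Q Λ 6) := by
  simpa [lgen, map_mul] using RingQuot.mkAlgHom_rel ℂ (LRel.cd' (q := Q) (ℓ := Λ))

lemma lr_bc : lgen Q Λ 1 * lgen Q Λ 2 = lgen Q Λ 2 * lgen Q Λ 1 := by
  simpa [lgen, map_mul] using RingQuot.mkAlgHom_rel ℂ (LRel.bc (q := Q) (ℓ := Λ))

lemma lr_bc_p : lgen Q Λ 5 * lgen Q Λ 6 = lgen Q Λ 6 * lgen Q Λ 5 := by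
  simpa [lgen, map_mul] using RingQuot.mkAlgHom_rel ℂ (LRel.bc' (q := Q) (ℓ := Λ))

lemma lr_comm₁ : lgen Q Λ 0 * lgen Q Λ 4 = lgen Q Λ 4 * lgen Q Λ 0 := by
  simpa [lgen, map_mul] using RingQuot.mkAlgHom_rel ℂ (LRel.comm₁ (q := Q) (ℓ := Λ))

lemma lr_comm₂ : lgen Q Λ 0 * lgen Q Λ 7 = lgen Q Λ 7 * lgen Q Λ 0 := by
  simpa [lgen, map_mul] using RingQuot.mkAlgHom_rel ℂ (LRel.comm₂ (q := Q) (ℓ := Λ))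

lemma lr_comm₃ : lgen Q Λ 1 * lgen Q Λ 5 = lgen Q Λ 5 * lgen Q Λ 1 := by
  simpa [lgen, map_mul] using RingQuot.mkAlgHom_rel ℂ (LRel.comm₃ (q := Q) (ℓ := Λ))

lemma lr_comm₄ : lgen Q Λ 1 * lgen Q Λ 6 = lgen Q Λ 6 * lgen Q Λ 1 := by
  simpa [lgen, map_mul] using RingQuot.mkAlgHom_rel ℂ (LRel.comm₄ (q := Q) (ℓ := Λ))

lemma lr_comm₅ : lgen Q Λ 2 * lgen Q Λ 5 = lgen Q Λ 5 * lgen Q Λ 2 := by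
  simpa [lgen, map_mul] using RingQuot.mkAlgHom_rel ℂ (LRel.comm₅ (q := Q) (ℓ := Λ))

lemma lr_comm₆ : lgen Q Λ 2 * lgen Q Λ 6 = lgen Q Λ 6 * lgen Q Λ 2 := by
  simpa [lgen, map_mul] using RingQuot.mkAlgHom_rel ℂ (LRel.comm₆ (q := Q) (ℓ := Λ))

lemma lr_comm₇ : lgen Q Λ 3 * lgen Q Λ 4 = lgen Q Λ 4 * lgen Q Λ 3 := by
  simpa [lgen, map_mul] using RingQuot.mkAlgHom_rel ℂ (LRel.comm₇ (q := Q) (ℓ := Λ))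

lemma lr_comm₈ : lgen Q Λ 3 * lgen Q Λ 7 = lgen Q Λ 7 * lgen Q Λ 3 := by
  simpa [lgen, map_mul] using RingQuot.mkAlgHom_rel ℂ (LRel.comm₈ (q := Q) (ℓ := Λ))

lemma lr_link₁ : lgen Q Λ 5 * lgen Q Λ 0 = Λ • (lgen Q Λ 0 * lgen Q Λ 5) := by
  have h := RingQuot.mkAlgHom_rel ℂ (LRel.link₁ (q := Q) (ℓ := Λ))
  rw [map_mul, map_smul, map_mul] at h
  exact h

lemma lr_link₂ : lgen Q Λ 0 * lgen Q Λ 6 = Λ • (lgen Q Λ 6 * lgen Q Λ 0) := by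
  have h := RingQuot.mkAlgHom_rel ℂ (LRel.link₂ (q := Q) (ℓ := Λ))
  rw [map_mul, map_smul, map_mul] at h
  exact h

lemma lr_link₃ : lgen Q Λ 4 * lgen Q Λ 1 = Λ • (lgen Q Λ 1 * lgen Q Λ 4) := by
  have h := RingQuot.mkAlgHom_rel ℂ (LRel.link₃ (q := Q) (ℓ := Λ))
  rw [map_mul, map_smul, map_mul] at h
  exact h

lemma lr_link₄ : lgen Q Λ 1 * lgen Q Λ 7 = Λ • (lgen Q Λ 7 * lgen Q Λ 1) := by
  have h := RingQuot.mkAlgHom_rel ℂ (LRel.link₄ (q := Q) (ℓ := Λ))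
  rw [map_mul, map_smul, map_mul] at h
  exact h

lemma lr_link₅ : lgen Q Λ 2 * lgen Q Λ 4 = Λ • (lgen Q Λ 4 * lgen Q Λ 2) := by
  have h := RingQuot.mkAlgHom_rel ℂ (LRel.link₅ (q := Q) (ℓ := Λ))
  rw [map_mul, map_smul, map_mul] at h
  exact h

lemma lr_link₆ : lgen Q Λ 7 * lgen Q Λ 2 = Λ • (lgen Q Λ 2 * lgen Q Λ 7) := by
  have h := RingQuot.mkAlgHom_rel ℂ (LRel.link₆ (q := Q) (ℓ := Λ))
  rw [map_mul, map_smul, map_mul] at h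
  exact h

lemma lr_link₇ : lgen Q Λ 3 * lgen Q Λ 5 = Λ • (lgen Q Λ 5 * lgen Q Λ 3) := by
  have h := RingQuot.mkAlgHom_rel ℂ (LRel.link₇ (q := Q) (ℓ := Λ))
  rw [map_mul, map_smul, map_mul] at h
  exact h

lemma lr_link₈ : lgen Q Λ 6 * lgen Q Λ 3 = Λ • (lgen Q Λ 3 * lgen Q Λ 6) := by
  have h := RingQuot.mkAlgHom_rel ℂ (LRel.link₈ (q := Q) (ℓ := Λ))
  rw [map_mul, map_smul, map_mul] at h
  exact h

lemma lr_ad : lgen Q Λ 0 * lgen Q Λ 3 - lgen Q Λ 3 * lgen Q Λ 0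
    = (Q⁻¹ - Q) • (lgen Q Λ 1 * lgen Q Λ 2) := by
  simpa [lgen, map_mul, map_sub] using RingQuot.mkAlgHom_rel ℂ (LRel.ad (q := Q) (ℓ := Λ))

lemma lr_ad_p : lgen Q Λ 4 * lgen Q Λ 7 - lgen Q Λ 7 * lgen Q Λ 4
    = (Q⁻¹ - Q) • (lgen Q Λ 5 * lgen Q Λ 6) := by
  simpa [lgen, map_mul, map_sub] using RingQuot.mkAlgHom_rel ℂ (LRel.ad' (q := Q) (ℓ := Λ))

lemma lr_det : lgen Q Λ 0 * lgen Q Λ 3 - Q⁻¹ • (lgen Q Λ 1 * lgen Q Λ 2) = 1 := by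
  simpa [lgen, map_mul, map_sub] using RingQuot.mkAlgHom_rel ℂ (LRel.det (q := Q) (ℓ := Λ))

lemma lr_det_p : lgen Q Λ 4 * lgen Q Λ 7 - Q⁻¹ • (lgen Q Λ 5 * lgen Q Λ 6) = 1 := by
  simpa [lgen, map_mul, map_sub] using RingQuot.mkAlgHom_rel ℂ (LRel.det' (q := Q) (ℓ := Λ))

lemma hL (hq : q ≠ 0) (hℓ : ℓ ≠ 0) :
    ∀ ⦃x y⦄, LRel Q Λ x y → preStar (vL q ℓ) x = preStar (vL q ℓ) y := by
  have hQ : Q ≠ 0 := Complex.ofReal_ne_zero.mpr hq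
  have hΛ : Λ ≠ 0 := Complex.ofReal_ne_zero.mpr hℓ
  intro x y hxy
  cases hxy with
  | ab =>
      rw [preStar_mul_ι, preStar_smul_mul_ι, MulOpposite.op_inj]
      simp only [vL0, vL1, vL2, vL3, vL4, vL5, vL6, vL7, smul_mul_assoc, mul_smul_comm,
        smul_smul, map_inv₀, map_neg, map_sub, Complex.conj_ofReal]
      rw [lr_cd_p q ℓ]
      all_goals match_scalars <;> (try field_simp) <;> (try ring)
  | ac =>
      rw [preStar_mul_ι, preStar_smul_mul_ι, MulOpposite.op_inj]
      simp only [vL0, vL1, vL2, vL3, vL4, vL5, vL6, vL7, smul_mul_assoc, mul_smul_comm,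
        smul_smul, map_inv₀, map_neg, map_sub, Complex.conj_ofReal]
      rw [lr_bd_p q ℓ]
      all_goals match_scalars <;> (try field_simp) <;> (try ring)
  | bd =>
      rw [preStar_mul_ι, preStar_smul_mul_ι, MulOpposite.op_inj]
      simp only [vL0, vL1, vL2, vL3, vL4, vL5, vL6, vL7, smul_mul_assoc, mul_smul_comm,
        smul_smul, map_inv₀, map_neg, map_sub, Complex.conj_ofReal]
      rw [lr_ac_p q ℓ]
      all_goals match_scalars <;> (try field_simp) <;> (try ring)
  | cd =>
      rw [preStar_mul_ι, preStar_smul_mul_ι, MulOpposite.op_inj]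
      simp only [vL0, vL1, vL2, vL3, vL4, vL5, vL6, vL7, smul_mul_assoc, mul_smul_comm,
        smul_smul, map_inv₀, map_neg, map_sub, Complex.conj_ofReal]
      rw [lr_ab_p q ℓ]
      all_goals match_scalars <;> (try field_simp) <;> (try ring)
  | ab' =>
      rw [preStar_mul_ι, preStar_smul_mul_ι, MulOpposite.op_inj]
      simp only [vL0, vL1, vL2, vL3, vL4, vL5, vL6, vL7, smul_mul_assoc, mul_smul_comm,
        smul_smul, map_inv₀, map_neg, map_sub, Complex.conj_ofReal]
      rw [lr_cd q ℓ]
      all_goals match_scalars <;> (try field_simp) <;> (try ring)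
  | ac' =>
      rw [preStar_mul_ι, preStar_smul_mul_ι, MulOpposite.op_inj]
      simp only [vL0, vL1, vL2, vL3, vL4, vL5, vL6, vL7, smul_mul_assoc, mul_smul_comm,
        smul_smul, map_inv₀, map_neg, map_sub, Complex.conj_ofReal]
      rw [lr_bd q ℓ]
      all_goals match_scalars <;> (try field_simp) <;> (try ring)
  | bd' =>
      rw [preStar_mul_ι, preStar_smul_mul_ι, MulOpposite.op_inj]
      simp only [vL0, vL1, vL2, vL3, vL4, vL5, vL6, vL7, smul_mul_assoc, mul_smul_comm,
        smul_smul, map_inv₀, map_neg, map_sub, Complex.conj_ofReal]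
      rw [lr_ac q ℓ]
      all_goals match_scalars <;> (try field_simp) <;> (try ring)
  | cd' =>
      rw [preStar_mul_ι, preStar_smul_mul_ι, MulOpposite.op_inj]
      simp only [vL0, vL1, vL2, vL3, vL4, vL5, vL6, vL7, smul_mul_assoc, mul_smul_comm,
        smul_smul, map_inv₀, map_neg, map_sub, Complex.conj_ofReal]
      rw [lr_ab q ℓ]
      all_goals match_scalars <;> (try field_simp) <;> (try ring)
  | link₁ =>
      rw [preStar_mul_ι, preStar_smul_mul_ι, MulOpposite.op_inj]
      simp only [vL0, vL1, vL2, vL3, vL4, vL5, vL6, vL7, smul_mul_assoc, mul_smul_comm,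
        smul_smul, map_inv₀, map_neg, map_sub, Complex.conj_ofReal]
      rw [lr_link₆ q ℓ]
      all_goals match_scalars <;> (try field_simp) <;> (try ring)
  | link₂ =>
      rw [preStar_mul_ι, preStar_smul_mul_ι, MulOpposite.op_inj]
      simp only [vL0, vL1, vL2, vL3, vL4, vL5, vL6, vL7, smul_mul_assoc, mul_smul_comm,
        smul_smul, map_inv₀, map_neg, map_sub, Complex.conj_ofReal]
      rw [lr_link₄ q ℓ]
      all_goals match_scalars <;> (try field_simp) <;> (try ring)
  | link₃ =>
      rw [preStar_mul_ι, preStar_smul_mul_ι, MulOpposite.op_inj]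
      simp only [vL0, vL1, vL2, vL3, vL4, vL5, vL6, vL7, smul_mul_assoc, mul_smul_comm,
        smul_smul, map_inv₀, map_neg, map_sub, Complex.conj_ofReal]
      rw [lr_link₈ q ℓ]
      all_goals match_scalars <;> (try field_simp) <;> (try ring)
  | link₄ =>
      rw [preStar_mul_ι, preStar_smul_mul_ι, MulOpposite.op_inj]
      simp only [vL0, vL1, vL2, vL3, vL4, vL5, vL6, vL7, smul_mul_assoc, mul_smul_comm,
        smul_smul, map_inv₀, map_neg, map_sub, Complex.conj_ofReal]
      rw [lr_link₂ q ℓ]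
      all_goals match_scalars <;> (try field_simp) <;> (try ring)
  | link₅ =>
      rw [preStar_mul_ι, preStar_smul_mul_ι, MulOpposite.op_inj]
      simp only [vL0, vL1, vL2, vL3, vL4, vL5, vL6, vL7, smul_mul_assoc, mul_smul_comm,
        smul_smul, map_inv₀, map_neg, map_sub, Complex.conj_ofReal]
      rw [lr_link₇ q ℓ]
      all_goals match_scalars <;> (try field_simp) <;> (try ring)
  | link₆ =>
      rw [preStar_mul_ι, preStar_smul_mul_ι, MulOpposite.op_inj]
      simp only [vL0, vL1, vL2, vL3, vL4, vL5, vL6, vL7, smul_mul_assoc, mul_smul_comm,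
        smul_smul, map_inv₀, map_neg, map_sub, Complex.conj_ofReal]
      rw [lr_link₁ q ℓ]
      all_goals match_scalars <;> (try field_simp) <;> (try ring)
  | link₇ =>
      rw [preStar_mul_ι, preStar_smul_mul_ι, MulOpposite.op_inj]
      simp only [vL0, vL1, vL2, vL3, vL4, vL5, vL6, vL7, smul_mul_assoc, mul_smul_comm,
        smul_smul, map_inv₀, map_neg, map_sub, Complex.conj_ofReal]
      rw [lr_link₅ q ℓ]
      all_goals match_scalars <;> (try field_simp) <;> (try ring)
  | link₈ =>
      rw [preStar_mul_ι, preStar_smul_mul_ι, MulOpposite.op_inj]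
      simp only [vL0, vL1, vL2, vL3, vL4, vL5, vL6, vL7, smul_mul_assoc, mul_smul_comm,
        smul_smul, map_inv₀, map_neg, map_sub, Complex.conj_ofReal]
      rw [lr_link₃ q ℓ]
      all_goals match_scalars <;> (try field_simp) <;> (try ring)
  | bc =>
      rw [preStar_mul_ι, preStar_mul_ι, MulOpposite.op_inj]
      simp only [vL0, vL1, vL2, vL3, vL4, vL5, vL6, vL7, smul_mul_assoc, mul_smul_comm,
        smul_smul, map_inv₀, map_neg, map_sub, Complex.conj_ofReal]
      rw [lr_bc_p q ℓ]
      all_goals match_scalars <;> (try field_simp) <;> (try ring)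
  | bc' =>
      rw [preStar_mul_ι, preStar_mul_ι, MulOpposite.op_inj]
      simp only [vL0, vL1, vL2, vL3, vL4, vL5, vL6, vL7, smul_mul_assoc, mul_smul_comm,
        smul_smul, map_inv₀, map_neg, map_sub, Complex.conj_ofReal]
      rw [lr_bc q ℓ]
      all_goals match_scalars <;> (try field_simp) <;> (try ring)
  | comm₁ =>
      rw [preStar_mul_ι, preStar_mul_ι, MulOpposite.op_inj]
      simp only [vL0, vL1, vL2, vL3, vL4, vL5, vL6, vL7, smul_mul_assoc, mul_smul_comm,
        smul_smul, map_inv₀, map_neg, map_sub, Complex.conj_ofReal]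
      rw [lr_comm₈ q ℓ]
      all_goals match_scalars <;> (try field_simp) <;> (try ring)
  | comm₂ =>
      rw [preStar_mul_ι, preStar_mul_ι, MulOpposite.op_inj]
      simp only [vL0, vL1, vL2, vL3, vL4, vL5, vL6, vL7, smul_mul_assoc, mul_smul_comm,
        smul_smul, map_inv₀, map_neg, map_sub, Complex.conj_ofReal]
      rw [lr_comm₂ q ℓ]
      all_goals match_scalars <;> (try field_simp) <;> (try ring)
  | comm₃ =>
      rw [preStar_mul_ι, preStar_mul_ι, MulOpposite.op_inj]
      simp only [vL0, vL1, vL2, vL3, vL4, vL5, vL6, vL7, smul_mul_assoc, mul_smul_comm,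
        smul_smul, map_inv₀, map_neg, map_sub, Complex.conj_ofReal]
      rw [lr_comm₆ q ℓ]
      all_goals match_scalars <;> (try field_simp) <;> (try ring)
  | comm₄ =>
      rw [preStar_mul_ι, preStar_mul_ι, MulOpposite.op_inj]
      simp only [vL0, vL1, vL2, vL3, vL4, vL5, vL6, vL7, smul_mul_assoc, mul_smul_comm,
        smul_smul, map_inv₀, map_neg, map_sub, Complex.conj_ofReal]
      rw [lr_comm₄ q ℓ]
      all_goals match_scalars <;> (try field_simp) <;> (try ring)
  | comm₅ =>
      rw [preStar_mul_ι, preStar_mul_ι, MulOpposite.op_inj]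
      simp only [vL0, vL1, vL2, vL3, vL4, vL5, vL6, vL7, smul_mul_assoc, mul_smul_comm,
        smul_smul, map_inv₀, map_neg, map_sub, Complex.conj_ofReal]
      rw [lr_comm₅ q ℓ]
      all_goals match_scalars <;> (try field_simp) <;> (try ring)
  | comm₆ =>
      rw [preStar_mul_ι, preStar_mul_ι, MulOpposite.op_inj]
      simp only [vL0, vL1, vL2, vL3, vL4, vL5, vL6, vL7, smul_mul_assoc, mul_smul_comm,
        smul_smul, map_inv₀, map_neg, map_sub, Complex.conj_ofReal]
      rw [lr_comm₃ q ℓ]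
      all_goals match_scalars <;> (try field_simp) <;> (try ring)
  | comm₇ =>
      rw [preStar_mul_ι, preStar_mul_ι, MulOpposite.op_inj]
      simp only [vL0, vL1, vL2, vL3, vL4, vL5, vL6, vL7, smul_mul_assoc, mul_smul_comm,
        smul_smul, map_inv₀, map_neg, map_sub, Complex.conj_ofReal]
      rw [lr_comm₇ q ℓ]
      all_goals match_scalars <;> (try field_simp) <;> (try ring)
  | comm₈ =>
      rw [preStar_mul_ι, preStar_mul_ι, MulOpposite.op_inj]
      simp only [vL0, vL1, vL2, vL3, vL4, vL5, vL6, vL7, smul_mul_assoc, mul_smul_comm,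
        smul_smul, map_inv₀, map_neg, map_sub, Complex.conj_ofReal]
      rw [lr_comm₁ q ℓ]
      all_goals match_scalars <;> (try field_simp) <;> (try ring)
  | ad =>
      rw [map_sub, preStar_mul_ι, preStar_mul_ι, preStar_smul_mul_ι, ← MulOpposite.op_sub,
        MulOpposite.op_inj]
      simp only [vL0, vL1, vL2, vL3, vL4, vL5, vL6, vL7, smul_mul_assoc, mul_smul_comm,
        smul_smul, map_inv₀, map_neg, map_sub, Complex.conj_ofReal]
      rw [lr_ad_p q ℓ]
      all_goals match_scalars <;> (try field_simp) <;> (try ring)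
  | ad' =>
      rw [map_sub, preStar_mul_ι, preStar_mul_ι, preStar_smul_mul_ι, ← MulOpposite.op_sub,
        MulOpposite.op_inj]
      simp only [vL0, vL1, vL2, vL3, vL4, vL5, vL6, vL7, smul_mul_assoc, mul_smul_comm,
        smul_smul, map_inv₀, map_neg, map_sub, Complex.conj_ofReal]
      rw [lr_ad q ℓ]
      all_goals match_scalars <;> (try field_simp) <;> (try ring)
  | det =>
      rw [map_sub, map_one, preStar_mul_ι, preStar_smul_mul_ι, ← MulOpposite.op_sub,
        show (1 : (LAlg Q Λ)ᵐᵒᵖ) = MulOpposite.op 1 from rfl, MulOpposite.op_inj]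
      simp only [vL0, vL1, vL2, vL3, vL4, vL5, vL6, vL7, smul_mul_assoc, mul_smul_comm,
        smul_smul, map_inv₀, map_neg, map_sub, Complex.conj_ofReal]
      rw [← lr_det_p q ℓ]
      all_goals match_scalars <;> (try field_simp) <;> (try ring)
  | det' =>
      rw [map_sub, map_one, preStar_mul_ι, preStar_smul_mul_ι, ← MulOpposite.op_sub,
        show (1 : (LAlg Q Λ)ᵐᵒᵖ) = MulOpposite.op 1 from rfl, MulOpposite.op_inj]
      simp only [vL0, vL1, vL2, vL3, vL4, vL5, vL6, vL7, smul_mul_assoc, mul_smul_comm,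
        smul_smul, map_inv₀, map_neg, map_sub, Complex.conj_ofReal]
      rw [← lr_det q ℓ]
      all_goals match_scalars <;> (try field_simp) <;> (try ring)


lemma lvals (hq : q ≠ 0) (hℓ : ℓ ≠ 0) : LStarVals Q Λ (qStar (vL q ℓ) (hL q ℓ hq hℓ)) := by
  refine ⟨?_, ?_, ?_, ?_, ?_, ?_, ?_, ?_⟩ <;>
    · rw [lgen_mk, qStar_gen]
      rfl

lemma lStar_isStar (hq : q ≠ 0) (hℓ : ℓ ≠ 0) : IsStar (qStar (vL q ℓ) (hL q ℓ hq hℓ)) := by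
  have hQ : Q ≠ 0 := Complex.ofReal_ne_zero.mpr hq
  have hone : (starRingEnd ℂ) (-Q⁻¹) * -Q = 1 := by
    rw [map_neg, map_inv₀, Complex.conj_ofReal]
    field_simp
  have hone' : (starRingEnd ℂ) (-Q) * -Q⁻¹ = 1 := by
    rw [map_neg, Complex.conj_ofReal]
    field_simp
  apply qStar_isStar
  intro i
  fin_cases i
  · show qStar (vL q ℓ) (hL q ℓ hq hℓ) (vL q ℓ 0) = RingQuot.mkAlgHom ℂ (LRel Q Λ) (ι ℂ 0)
    rw [vL0, lgen_mk, qStar_gen, vL7, lgen_mk]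
  · show qStar (vL q ℓ) (hL q ℓ hq hℓ) (vL q ℓ 1) = RingQuot.mkAlgHom ℂ (LRel Q Λ) (ι ℂ 1)
    rw [vL1, qStar_smul, lgen_mk, qStar_gen, vL6, smul_smul, hone, one_smul, lgen_mk]
  · show qStar (vL q ℓ) (hL q ℓ hq hℓ) (vL q ℓ 2) = RingQuot.mkAlgHom ℂ (LRel Q Λ) (ι ℂ 2)
    rw [vL2, qStar_smul, lgen_mk, qStar_gen, vL5, smul_smul, hone', one_smul, lgen_mk]
  · show qStar (vL q ℓ) (hL q ℓ hq hℓ) (vL q ℓ 3) = RingQuot.mkAlgHom ℂ (LRel Q Λ) (ι ℂ 3)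
    rw [vL3, lgen_mk, qStar_gen, vL4, lgen_mk]
  · show qStar (vL q ℓ) (hL q ℓ hq hℓ) (vL q ℓ 4) = RingQuot.mkAlgHom ℂ (LRel Q Λ) (ι ℂ 4)
    rw [vL4, lgen_mk, qStar_gen, vL3, lgen_mk]
  · show qStar (vL q ℓ) (hL q ℓ hq hℓ) (vL q ℓ 5) = RingQuot.mkAlgHom ℂ (LRel Q Λ) (ι ℂ 5)
    rw [vL5, qStar_smul, lgen_mk, qStar_gen, vL2, smul_smul, hone, one_smul, lgen_mk]
  · show qStar (vL q ℓ) (hL q ℓ hq hℓ) (vL q ℓ 6) = RingQuot.mkAlgHom ℂ (LRel Q Λ) (ι ℂ 6)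
    rw [vL6, qStar_smul, lgen_mk, qStar_gen, vL1, smul_smul, hone', one_smul, lgen_mk]
  · show qStar (vL q ℓ) (hL q ℓ hq hℓ) (vL q ℓ 7) = RingQuot.mkAlgHom ℂ (LRel Q Λ) (ι ℂ 7)
    rw [vL7, lgen_mk, qStar_gen, vL0, lgen_mk]

lemma lorentz_unique (hq : q ≠ 0) (hℓ : ℓ ≠ 0) :
    ∃! st : LAlg Q Λ → LAlg Q Λ, IsStar st ∧ LStarVals Q Λ st := by
  refine ⟨qStar (vL q ℓ) (hL q ℓ hq hℓ), ⟨lStar_isStar q ℓ hq hℓ, lvals q ℓ hq hℓ⟩, ?_⟩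
  rintro st ⟨hst, hv⟩
  apply isStar_ext st _ hst (lStar_isStar q ℓ hq hℓ)
  have hv' := lvals q ℓ hq hℓ
  intro i
  fin_cases i
  · show st (lgen Q Λ 0) = qStar (vL q ℓ) (hL q ℓ hq hℓ) (lgen Q Λ 0)
    rw [hv.1, hv'.1]
  · show st (lgen Q Λ 1) = qStar (vL q ℓ) (hL q ℓ hq hℓ) (lgen Q Λ 1)
    rw [hv.2.1, hv'.2.1]
  · show st (lgen Q Λ 2) = qStar (vL q ℓ) (hL q ℓ hq hℓ) (lgen Q Λ 2)
    rw [hv.2.2.1, hv'.2.2.1]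
  · show st (lgen Q Λ 3) = qStar (vL q ℓ) (hL q ℓ hq hℓ) (lgen Q Λ 3)
    rw [hv.2.2.2.1, hv'.2.2.2.1]
  · show st (lgen Q Λ 4) = qStar (vL q ℓ) (hL q ℓ hq hℓ) (lgen Q Λ 4)
    rw [hv.2.2.2.2.1, hv'.2.2.2.2.1]
  · show st (lgen Q Λ 5) = qStar (vL q ℓ) (hL q ℓ hq hℓ) (lgen Q Λ 5)
    rw [hv.2.2.2.2.2.1, hv'.2.2.2.2.2.1]
  · show st (lgen Q Λ 6) = qStar (vL q ℓ) (hL q ℓ hq hℓ) (lgen Q Λ 6)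
    rw [hv.2.2.2.2.2.2.1, hv'.2.2.2.2.2.2.1]
  · show st (lgen Q Λ 7) = qStar (vL q ℓ) (hL q ℓ hq hℓ) (lgen Q Λ 7)
    rw [hv.2.2.2.2.2.2.2, hv'.2.2.2.2.2.2.2]

end Lor

section Coact
variable (q ℓ : ℝ)

local notation "Q" => (q : ℂ)
local notation "Λ" => (ℓ : ℂ)

set_option maxHeartbeats 1000000 in
lemma coaction_intertwine (hq : q ≠ 0)
    (stM : MAlg Q Λ → MAlg Q Λ) (stL : LAlg Q Λ → LAlg Q Λ)
    (ρ : MAlg Q Λ →ₐ[ℂ] (LAlg Q Λ ⊗[ℂ] MAlg Q Λ))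
    (hM1 : IsStar stM) (hM2 : MStarVals Q Λ stM)
    (hL1 : IsStar stL) (hL2 : LStarVals Q Λ stL)
    (hρ : IsCoaction Q Λ ρ) :
    ∃ T : (LAlg Q Λ ⊗[ℂ] MAlg Q Λ) → (LAlg Q Λ ⊗[ℂ] MAlg Q Λ),
      (∀ u v, T (u + v) = T u + T v) ∧
      (∀ (x : LAlg Q Λ) (y : MAlg Q Λ), T (x ⊗ₜ[ℂ] y) = stL x ⊗ₜ[ℂ] stM y) ∧
      (∀ x : MAlg Q Λ, ρ (stM x) = T (ρ x)) := by
  have hQ : Q ≠ 0 := Complex.ofReal_ne_zero.mpr hq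
  obtain ⟨hMa, hMs, hMm, hMo, hMi⟩ := hM1
  obtain ⟨hLa, hLs, hLm, hLo, hLi⟩ := hL1
  have stM0 : stM 0 = 0 := by have := hMs 0 0; simpa using this
  have stL0 : stL 0 = 0 := by have := hLs 0 0; simpa using this
  let F : LAlg Q Λ →+ (MAlg Q Λ →+ LAlg Q Λ ⊗[ℂ] MAlg Q Λ) :=
    { toFun := fun x =>
        { toFun := fun y => stL x ⊗ₜ[ℂ] stM y
          map_zero' := by
            show stL x ⊗ₜ[ℂ] stM 0 = 0
            rw [stM0, TensorProduct.tmul_zero]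
          map_add' := fun y₁ y₂ => by
            show stL x ⊗ₜ[ℂ] stM (y₁ + y₂) = stL x ⊗ₜ[ℂ] stM y₁ + stL x ⊗ₜ[ℂ] stM y₂
            rw [hMa, TensorProduct.tmul_add] }
      map_zero' := by
        ext y
        show stL 0 ⊗ₜ[ℂ] stM y = 0
        rw [stL0, TensorProduct.zero_tmul]
      map_add' := fun x₁ x₂ => by
        ext y
        show stL (x₁ + x₂) ⊗ₜ[ℂ] stM y = stL x₁ ⊗ₜ[ℂ] stM y + stL x₂ ⊗ₜ[ℂ] stM y
        rw [hLa, TensorProduct.add_tmul] }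
  have hbal : ∀ (z : ℂ) (x : LAlg Q Λ) (y : MAlg Q Λ), F (z • x) y = F x (z • y) := by
    intro z x y
    show stL (z • x) ⊗ₜ[ℂ] stM y = stL x ⊗ₜ[ℂ] stM (z • y)
    rw [hLs, hMs, TensorProduct.smul_tmul]
  let T := TensorProduct.liftAddHom F hbal
  have Ttmul : ∀ (x : LAlg Q Λ) (y : MAlg Q Λ),
      T (x ⊗ₜ[ℂ] y) = stL x ⊗ₜ[ℂ] stM y := fun x y =>
    TensorProduct.liftAddHom_tmul F hbal x y
  have Tone : T 1 = 1 := by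
    rw [Algebra.TensorProduct.one_def, Ttmul, hMo, hLo, ← Algebra.TensorProduct.one_def]
  have Tsmul : ∀ (z : ℂ) u, T (z • u) = (starRingEnd ℂ) z • T u := by
    intro z u
    induction u using TensorProduct.induction_on with
    | zero => simp
    | tmul x y => rw [TensorProduct.smul_tmul', Ttmul, hLs, Ttmul, TensorProduct.smul_tmul']
    | add u v hu hv => rw [smul_add, map_add, hu, map_add, hv, smul_add]
  have Tmul : ∀ u w, T (u * w) = T w * T u := by
    intro u w
    induction u using TensorProduct.induction_on with
    | zero => simp
    | tmul x y =>
        induction w using TensorProduct.induction_on with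
        | zero => simp
        | tmul x' y' =>
            rw [Algebra.TensorProduct.tmul_mul_tmul, Ttmul, Ttmul, Ttmul, hLm, hMm,
              Algebra.TensorProduct.tmul_mul_tmul]
        | add w₁ w₂ h1 h2 => rw [mul_add, map_add, h1, h2, map_add, add_mul]
    | add u₁ u₂ h1 h2 => rw [add_mul, map_add, h1, h2, map_add, mul_add]
  have hst : ∀ s r : Fin 2, stM (tmat Q Λ s r) = tmat Q Λ r s := by
    intro s r
    fin_cases s <;> fin_cases r
    · exact hM2.1
    · exact hM2.2.1
    · exact hM2.2.2.1
    · exact hM2.2.2.2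
  have hy : ∀ i s : Fin 2, stL (ymat Q Λ i s) = σmat Q Λ s i := by
    intro i s
    fin_cases i <;> fin_cases s
    · exact hL2.2.2.2.2.1
    · exact hL2.2.2.2.2.2.1
    · exact hL2.2.2.2.2.2.2.1
    · exact hL2.2.2.2.2.2.2.2
  have hone : (starRingEnd ℂ) (-Q) * -Q⁻¹ = 1 := by
    rw [map_neg, Complex.conj_ofReal]
    field_simp
  have hone' : (starRingEnd ℂ) (-Q⁻¹) * -Q = 1 := by
    rw [map_neg, map_inv₀, Complex.conj_ofReal]
    field_simp
  have hσ : ∀ r j : Fin 2, stL (σmat Q Λ r j) = ymat Q Λ j r := by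
    intro r j
    fin_cases r <;> fin_cases j
    · exact hL2.2.2.2.1
    · show stL ((-Q) • lgen Q Λ 1) = ymat Q Λ 1 0
      rw [hLs, hL2.2.1, smul_smul, hone, one_smul]
      rfl
    · show stL ((-Q⁻¹) • lgen Q Λ 2) = ymat Q Λ 0 1
      rw [hLs, hL2.2.2.1, smul_smul, hone', one_smul]
      rfl
    · exact hL2.1
  refine ⟨(T : LAlg Q Λ ⊗[ℂ] MAlg Q Λ → LAlg Q Λ ⊗[ℂ] MAlg Q Λ), fun u v => map_add T u v, Ttmul, ?_⟩
  intro x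
  obtain ⟨y, rfl⟩ := RingQuot.mkAlgHom_surjective ℂ (MRel Q Λ) x
  induction y using FreeAlgebra.induction with
  | grade0 z =>
      rw [AlgHom.commutes (RingQuot.mkAlgHom ℂ (MRel Q Λ)) z]
      simp only [Algebra.algebraMap_eq_smul_one, hMs, hMo, map_smul, map_one, Tsmul, Tone]
  | grade1 i =>
      fin_cases i
      · show ρ (stM (tmat Q Λ 0 0)) = T (ρ (tmat Q Λ 0 0))
        rw [hst, hρ 0 0]
        simp only [Fin.sum_univ_two, map_add, Ttmul, hLm, hσ, hy, hst]
        abel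
      · show ρ (stM (tmat Q Λ 0 1)) = T (ρ (tmat Q Λ 0 1))
        rw [hst, hρ 1 0, hρ 0 1]
        simp only [Fin.sum_univ_two, map_add, Ttmul, hLm, hσ, hy, hst]
        abel
      · show ρ (stM (tmat Q Λ 1 0)) = T (ρ (tmat Q Λ 1 0))
        rw [hst, hρ 0 1, hρ 1 0]
        simp only [Fin.sum_univ_two, map_add, Ttmul, hLm, hσ, hy, hst]
        abel
      · show ρ (stM (tmat Q Λ 1 1)) = T (ρ (tmat Q Λ 1 1))
        rw [hst, hρ 1 1]
        simp only [Fin.sum_univ_two, map_add, Ttmul, hLm, hσ, hy, hst]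
        abel
  | mul a b ha hb =>
      rw [map_mul, hMm, map_mul, map_mul, ha, hb, Tmul]
  | add a b ha hb =>
      rw [map_add, hMa, map_add, map_add, ha, hb, map_add T]

end Coact

end QStar

/-- For nonzero real `q, ℓ`: (i) there is a unique star structure `★ₘ` on `M^{ℓ,q}` with
`t₁₁^★ = t₁₁`, `t₁₂^★ = t₂₁`, `t₂₁^★ = t₁₂`, `t₂₂^★ = t₂₂`, and it fixes the quantum
metric `Q_{ℓ/q}`; (ii) there is a unique star structure `★ₗ` on `L_{q,ℓ}` with the
Lorentzian values; (iii) the coaction `ρ` intertwines them: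
`ρ ∘ ★ₘ = (★ₗ ⊗ ★ₘ) ∘ ρ`. -/
theorem minkowski_real_form (q ℓ : ℝ) (hq : q ≠ 0) (hℓ : ℓ ≠ 0) :
    (∃! st : MAlg ((q : ℂ)) ((ℓ : ℂ)) → MAlg ((q : ℂ)) ((ℓ : ℂ)), IsStar st ∧ MStarVals ((q : ℂ)) ((ℓ : ℂ)) st) ∧
    (∀ st : MAlg ((q : ℂ)) ((ℓ : ℂ)) → MAlg ((q : ℂ)) ((ℓ : ℂ)),
      IsStar st ∧ MStarVals ((q : ℂ)) ((ℓ : ℂ)) st →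
        st (Qmetric ((q : ℂ)) ((ℓ : ℂ))) = Qmetric ((q : ℂ)) ((ℓ : ℂ))) ∧
    (∃! st : LAlg ((q : ℂ)) ((ℓ : ℂ)) → LAlg ((q : ℂ)) ((ℓ : ℂ)), IsStar st ∧ LStarVals ((q : ℂ)) ((ℓ : ℂ)) st) ∧
    (∀ (stM : MAlg ((q : ℂ)) ((ℓ : ℂ)) → MAlg ((q : ℂ)) ((ℓ : ℂ))) (stL : LAlg ((q : ℂ)) ((ℓ : ℂ)) → LAlg ((q : ℂ)) ((ℓ : ℂ)))
        (ρ : MAlg ((q : ℂ)) ((ℓ : ℂ)) →ₐ[ℂ] (LAlg ((q : ℂ)) ((ℓ : ℂ)) ⊗[ℂ] MAlg ((q : ℂ)) ((ℓ : ℂ)))),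
      IsStar stM → MStarVals ((q : ℂ)) ((ℓ : ℂ)) stM → IsStar stL → LStarVals ((q : ℂ)) ((ℓ : ℂ)) stL →
      IsCoaction ((q : ℂ)) ((ℓ : ℂ)) ρ →
        ∃ T : (LAlg ((q : ℂ)) ((ℓ : ℂ)) ⊗[ℂ] MAlg ((q : ℂ)) ((ℓ : ℂ))) → (LAlg ((q : ℂ)) ((ℓ : ℂ)) ⊗[ℂ] MAlg ((q : ℂ)) ((ℓ : ℂ))),
          (∀ u v, T (u + v) = T u + T v) ∧
          (∀ (x : LAlg ((q : ℂ)) ((ℓ : ℂ))) (y : MAlg ((q : ℂ)) ((ℓ : ℂ))),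
            T (x ⊗ₜ[ℂ] y) = stL x ⊗ₜ[ℂ] stM y) ∧
          (∀ x : MAlg ((q : ℂ)) ((ℓ : ℂ)), ρ (stM x) = T (ρ x))) := by
  refine ⟨QStar.mink_unique q ℓ hq hℓ, fun st h => QStar.mink_metric q ℓ st h,
    QStar.lorentz_unique q ℓ hq hℓ, ?_⟩
  intro stM stL ρ h1 h2 h3 h4 h5
  exact QStar.coaction_intertwine q ℓ hq stM stL ρ h1 h2 h3 h4 h5
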